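/- Let ν > 0 and define F₂(t) = (1/(t/2 + ν) − 1/(t + ν))/(1/(t/4 + ν) − 1/(t/2 + ν)). If t > 0 and F₂(t) ≥ 3/2, then F₂(t/2) > 3/2. -/

import Mathlib

theorem stmt_3 (ν t : ℝ) (hν : 0 < ν) (ht : 0 < t)
    (hF : (1/(t/2 + ν) - 1/(t + ν)) / (1/(t/4 + ν) - 1/(t/2 + ν)) ≥ 3/2) :
    (1/((t/2)/2 + ν) - 1/((t/2) + ν)) / (1/((t/2)/4 + ν) - 1/((t/2)/2 + ν)) > 3/2 := by
  have h1 : 0 < t/4 + ν := by linarith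
  have h2 : 0 < t/2 + ν := by linarith
  have h3 : 0 < t + ν := by linarith
  have h8 : 0 < t/8 + ν := by linarith
  have n1 : t/4 + ν ≠ 0 := ne_of_gt h1
  have n2 : t/2 + ν ≠ 0 := ne_of_gt h2
  have n3 : t + ν ≠ 0 := ne_of_gt h3
  have n8 : t/2/4 + ν ≠ 0 := by intro h; nlinarith
  have n8' : t/2/2 + ν ≠ 0 := by intro h; nlinarith
  have n2' : t/2 + ν ≠ 0 := n2
  have hD : 0 < 1/(t/4 + ν) - 1/(t/2 + ν) := by
    rw [sub_pos]
    exact one_div_lt_one_div_of_lt h1 (by linarith)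
  have hD' : 0 < 1/((t/2)/4 + ν) - 1/((t/2)/2 + ν) := by
    rw [sub_pos]
    exact one_div_lt_one_div_of_lt (by linarith) (by linarith)
  rw [ge_iff_le, le_div_iff₀ hD] at hF
  have hkey : 2 * t ≤ ν := by
    field_simp at hF
    nlinarith [mul_pos h2 ht, mul_pos h1 ht, mul_pos (mul_pos h1 h2) h3]
  rw [gt_iff_lt, lt_div_iff₀ hD']
  have key2 : t < ν := by nlinarith
  have goal : (3:ℝ)/2 * (t/8 / ((t/8+ν)*(t/4+ν))) < t/4 / ((t/4+ν)*(t/2+ν)) := by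
    have p1 : (0:ℝ) < (t/8+ν)*(t/4+ν) := by positivity
    have p2 : (0:ℝ) < (t/4+ν)*(t/2+ν) := by positivity
    rw [mul_div_assoc', div_lt_div_iff₀ p1 p2]
    nlinarith [mul_pos h1 ht, mul_pos h8 ht, mul_pos ht ht]
  calc 3/2 * (1/((t/2)/4 + ν) - 1/((t/2)/2 + ν))
      = (3:ℝ)/2 * (t/8 / ((t/8+ν)*(t/4+ν))) := by field_simp; ring
    _ < t/4 / ((t/4+ν)*(t/2+ν)) := goal
    _ = 1/((t/2)/2 + ν) - 1/((t/2) + ν) := by field_simp; ring
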